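/- Fix an angle α with π/2 ≤ α < π and let c = cos α ≤ 0. Any finite set of unit vectors in ℝᵈ such that among any three of them some two have inner product exactly c has cardinality at most 2d + 2. -/

import Mathlib

open Matrix

lemma trace_pow_eq_sum_eig {n : Type*} [Fintype n] [DecidableEq n]
    {A : Matrix n n ℝ} (hA : A.IsHermitian) (k : ℕ) :
    (A ^ k).trace = ∑ i, hA.eigenvalues i ^ k := by
  set U : Matrix n n ℝ := (hA.eigenvectorUnitary : Matrix n n ℝ) with hU
  have hU1 : U * star U = 1 := (Matrix.mem_unitaryGroup_iff).mp hA.eigenvectorUnitary.2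
  have hU2 : star U * U = 1 := (Matrix.mem_unitaryGroup_iff').mp hA.eigenvectorUnitary.2
  set D : Matrix n n ℝ := Matrix.diagonal (RCLike.ofReal ∘ hA.eigenvalues) with hD
  have hpow : A ^ k = U * D ^ k * star U := by
    induction k with
    | zero => simp [pow_zero, hU1]
    | succ k ih =>
        rw [pow_succ, ih, hA.spectral_theorem, Unitary.conjStarAlgAut_apply, ← hU, ← hD, pow_succ]
        simp only [Matrix.mul_assoc]
        rw [← Matrix.mul_assoc (star U) U (D * star U), hU2, Matrix.one_mul]
  rw [hpow, Matrix.trace_mul_cycle, hU2, Matrix.one_mul, hD, Matrix.diagonal_pow,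
    Matrix.trace_diagonal]
  simp

set_option maxHeartbeats 1000000 in
theorem stmt15 (d : ℕ) (α : ℝ) (hα : Real.pi / 2 ≤ α) (hα' : α < Real.pi)
    (c : ℝ) (hc : c = Real.cos α)
    (S : Finset (EuclideanSpace ℝ (Fin d)))
    (hunit : ∀ v ∈ S, ‖v‖ = 1)
    (hang : ∀ x ∈ S, ∀ y ∈ S, ∀ z ∈ S, x ≠ y → y ≠ z → x ≠ z →
      inner ℝ x y = c ∨ inner ℝ y z = c ∨ inner ℝ x z = c) :
    S.card ≤ 2 * d + 2 := by
  have hc0 : c ≤ 0 := by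
    rw [hc]
    exact Real.cos_nonpos_of_pi_div_two_le_of_le hα (by linarith [Real.pi_pos])
  set t : ℝ := 1 - c with htdef
  have ht1 : (1:ℝ) ≤ t := by simp [htdef]; linarith
  set ι := {x // x ∈ S}
  set n := S.card with hn
  have hcard : Fintype.card ι = n := Fintype.card_coe S
  set B : Matrix ι (Fin d ⊕ Unit) ℝ := Matrix.of (fun i s =>
    Sum.elim (fun k => (i : EuclideanSpace ℝ (Fin d)) k) (fun _ => Real.sqrt (-c)) s) with hB
  obtain ⟨M, hMdef⟩ : ∃ M : Matrix ι ι ℝ, M = B * Bᴴ := ⟨_, rfl⟩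
  have hPSD : M.PosSemidef := hMdef ▸ Matrix.posSemidef_self_mul_conjTranspose B
  have hHerm : M.IsHermitian := hPSD.1
  have hrank : M.rank ≤ d + 1 := by
    calc M.rank ≤ B.rank := hMdef ▸ Matrix.rank_mul_le_left B Bᴴ
      _ ≤ Fintype.card (Fin d ⊕ Unit) := Matrix.rank_le_card_width B
      _ = d + 1 := by simp
  have hM : ∀ i j : ι, M i j
      = (inner ℝ (i : EuclideanSpace ℝ (Fin d)) (j : EuclideanSpace ℝ (Fin d)) : ℝ) - c := by
    intro i j
    have h1 : M i j = ∑ s, B i s * B j s := by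
      simp [hMdef, Matrix.mul_apply, Matrix.conjTranspose_apply]
    rw [h1, Fintype.sum_sum_type, real_inner_comm]
    simp [hB, PiLp.inner_apply, RCLike.inner_apply, Real.mul_self_sqrt (neg_nonneg.2 hc0)]
    ring
  have hMdiag : ∀ i : ι, M i i = t := by
    intro i
    rw [hM i i, real_inner_self_eq_norm_sq, hunit _ i.2]
    simp [htdef]
  -- off-diagonal part
  set E : ι → ι → ℝ := fun i j => if i = j then 0 else M i j with hE
  have hE3 : ∀ i j k : ι, E i j * E j k * E k i = 0 := by
    intro i j k
    by_cases hij : i = j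
    · simp [hE, hij]
    by_cases hjk : j = k
    · simp [hE, hjk]
    by_cases hki : k = i
    · simp [hE, hki]
    have hvij : (i : EuclideanSpace ℝ (Fin d)) ≠ j := fun h => hij (Subtype.ext h)
    have hvjk : (j : EuclideanSpace ℝ (Fin d)) ≠ k := fun h => hjk (Subtype.ext h)
    have hvik : (i : EuclideanSpace ℝ (Fin d)) ≠ k := fun h => hki (Subtype.ext h.symm)
    rcases hang i i.2 j j.2 k k.2 hvij hvjk hvik with h | h | h
    · have h0 : M i j = 0 := by rw [hM, h]; ring
      simp [hE, hij, h0]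
    · have h0 : M j k = 0 := by rw [hM, h]; ring
      simp [hE, hjk, h0]
    · have h0 : M k i = 0 := by
        rw [hM, real_inner_comm, h]; ring
      simp [hE, hki, h0]
  set q : ℝ := ∑ i : ι, ∑ j : ι, E i j * E j i with hq
  -- traces
  have htr1 : M.trace = n * t := by
    have : M.trace = ∑ i : ι, M i i := rfl
    rw [this]
    rw [Finset.sum_congr rfl (fun i _ => hMdiag i), Finset.sum_const]
    simp [hcard, mul_comm]
  have key2 : ∀ i j : ι, M i j * M j i = (if i = j then t^2 else 0) + E i j * E j i := by
    intro i j
    by_cases hij : i = j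
    · subst hij; simp [hE, hMdiag, pow_two]
    · have hji : ¬ j = i := fun h => hij h.symm
      simp [hE, hij, hji]
  have htr2 : (M ^ 2).trace = n * t^2 + q := by
    have h0 : (M ^ 2).trace = ∑ i : ι, ∑ j : ι, M i j * M j i := by
      rw [pow_two, Matrix.trace]
      exact Finset.sum_congr rfl fun i _ => Matrix.mul_apply
    rw [h0]
    simp_rw [key2, Finset.sum_add_distrib, Finset.sum_ite_eq, Finset.mem_univ, if_true]
    rw [Finset.sum_const]
    simp [hq, hcard, mul_comm]
  have key3 : ∀ i j k : ι, M i j * M j k * M k i =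
      (if i = j ∧ j = k then t^3 else 0)
      + (if i = j then t * (E j k * E k j) else 0)
      + (if j = k then t * (E i j * E j i) else 0)
      + (if k = i then t * (E i j * E j i) else 0) := by
    intro i j k
    by_cases hij : i = j
    · subst hij
      by_cases hjk : i = k
      · subst hjk
        simp [hE, hMdiag]
        ring
      · have hki : ¬ k = i := fun h => hjk h.symm
        simp [hE, hjk, hki, hMdiag]
        ring
    · by_cases hjk : j = k
      · subst hjk
        have hji : ¬ j = i := fun h => hij h.symm
        simp [hE, hij, hji, hMdiag]
        ring
      · by_cases hki : k = i
        · subst hki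
          have hkj : ¬ k = j := hij
          have hjk' : ¬ j = k := hjk
          simp [hE, hkj, hjk', hMdiag]
          ring
        · rw [if_neg (by tauto), if_neg hij, if_neg hjk, if_neg hki]
          have h0 := hE3 i j k
          have e1 : E i j = M i j := by simp [hE, hij]
          have e2 : E j k = M j k := by simp [hE, hjk]
          have e3 : E k i = M k i := by simp [hE, hki]
          rw [e1, e2, e3] at h0
          linear_combination h0
  have htr3 : (M ^ 3).trace = n * t^3 + 3 * t * q := by
    have h0 : (M ^ 3).trace = ∑ i : ι, ∑ j : ι, ∑ k : ι, M i j * (M j k * M k i) := by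
      have hM3 : M ^ 3 = M * (M * M) := by rw [pow_succ, pow_two, mul_assoc]
      rw [hM3, Matrix.trace]
      refine Finset.sum_congr rfl fun i _ => ?_
      rw [Matrix.diag_apply, Matrix.mul_apply]
      refine Finset.sum_congr rfl fun j _ => ?_
      rw [Matrix.mul_apply, Finset.mul_sum]
    rw [h0]
    simp_rw [← mul_assoc, key3, Finset.sum_add_distrib]
    have T1 : (∑ i : ι, ∑ j : ι, ∑ k : ι, if i = j ∧ j = k then t^3 else 0) = n * t^3 := by
      have h1 : ∀ i j : ι, (∑ k : ι, if i = j ∧ j = k then t^3 else 0)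
          = if i = j then t^3 else 0 := by
        intro i j
        by_cases h : i = j
        · simp [h]
        · simp [h]
      simp_rw [h1, Finset.sum_ite_eq, Finset.mem_univ, if_true]
      rw [Finset.sum_const]; simp [hcard, mul_comm]
    have T2 : (∑ i : ι, ∑ j : ι, ∑ k : ι, if i = j then t * (E j k * E k j) else 0)
        = t * q := by
      have h1 : ∀ i j : ι, (∑ k : ι, if i = j then t * (E j k * E k j) else 0)
          = if i = j then t * ∑ k : ι, E j k * E k j else 0 := by
        intro i j
        by_cases h : i = j
        · simp [h, Finset.mul_sum]
        · simp [h]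
      simp_rw [h1, Finset.sum_ite_eq, Finset.mem_univ, if_true, hq, Finset.mul_sum]
    have T3 : (∑ i : ι, ∑ j : ι, ∑ k : ι, if j = k then t * (E i j * E j i) else 0)
        = t * q := by
      simp_rw [Finset.sum_ite_eq, Finset.mem_univ, if_true, hq, Finset.mul_sum]
    have T4 : (∑ i : ι, ∑ j : ι, ∑ k : ι, if k = i then t * (E i j * E j i) else 0)
        = t * q := by
      simp_rw [Finset.sum_ite_eq', Finset.mem_univ, if_true, hq, Finset.mul_sum]
    rw [T1, T2, T3, T4]; ring
  -- eigenvalues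
  set lam : ι → ℝ := hHerm.eigenvalues with hlam
  have hlam0 : ∀ i, 0 ≤ lam i := hPSD.eigenvalues_nonneg
  have hS1 : (∑ i, lam i) = n * t := by
    have := trace_pow_eq_sum_eig hHerm 1
    simp only [pow_one] at this
    rw [← this, htr1]
  have hS2 : (∑ i, lam i ^ 2) = n * t^2 + q := by
    rw [← trace_pow_eq_sum_eig hHerm 2, htr2]
  have hS3 : (∑ i, lam i ^ 3) = n * t^3 + 3 * t * q := by
    rw [← trace_pow_eq_sum_eig hHerm 3, htr3]
  set S1 : ℝ := ∑ i, lam i with hS1d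
  set S2 : ℝ := ∑ i, lam i ^ 2 with hS2d
  set S3 : ℝ := ∑ i, lam i ^ 3 with hS3d
  have hS2nonneg : 0 ≤ S2 := Finset.sum_nonneg fun i _ => sq_nonneg _
  -- support bound
  have hsupp : S1 ^ 2 ≤ (d + 1 : ℝ) * S2 := by
    set T : Finset ι := Finset.univ.filter (fun i => lam i ≠ 0) with hT
    have hTcard : T.card ≤ d + 1 := by
      have h1 : T.card = Fintype.card {i // lam i ≠ 0} := (Fintype.card_subtype _).symm
      rw [h1, ← hHerm.rank_eq_card_non_zero_eigs]
      exact hrank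
    have hsum1 : S1 = ∑ i ∈ T, lam i := by
      rw [hS1d]
      exact (Finset.sum_filter_ne_zero Finset.univ).symm
    have hcs : (∑ i ∈ T, lam i) ^ 2 ≤ T.card * ∑ i ∈ T, lam i ^ 2 :=
      sq_sum_le_card_mul_sum_sq
    have hsub : (∑ i ∈ T, lam i ^ 2) ≤ S2 := by
      apply Finset.sum_le_sum_of_subset_of_nonneg (Finset.filter_subset _ _)
      intro i _ _; exact sq_nonneg _
    calc S1 ^ 2 = (∑ i ∈ T, lam i) ^ 2 := by rw [hsum1]
      _ ≤ T.card * ∑ i ∈ T, lam i ^ 2 := hcs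
      _ ≤ (d + 1 : ℝ) * S2 := by
          apply mul_le_mul _ hsub (Finset.sum_nonneg fun i _ => sq_nonneg _) (by positivity)
          exact_mod_cast hTcard
  -- Cauchy-Schwarz : S2^2 ≤ S1 * S3
  have hcs2 : S2 ^ 2 ≤ S1 * S3 := by
    have h := Finset.sum_mul_sq_le_sq_mul_sq Finset.univ
      (fun i => Real.sqrt (lam i)) (fun i => Real.sqrt (lam i) * lam i)
    have e1 : (∑ i, Real.sqrt (lam i) * (Real.sqrt (lam i) * lam i)) = S2 := by
      rw [hS2d]
      apply Finset.sum_congr rfl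
      intro i _
      rw [← mul_assoc, Real.mul_self_sqrt (hlam0 i), pow_two]
    have e2 : (∑ i, Real.sqrt (lam i) ^ 2) = S1 := by
      rw [hS1d]
      exact Finset.sum_congr rfl fun i _ => Real.sq_sqrt (hlam0 i)
    have e3 : (∑ i, (Real.sqrt (lam i) * lam i) ^ 2) = S3 := by
      rw [hS3d]
      apply Finset.sum_congr rfl
      intro i _
      rw [mul_pow, Real.sq_sqrt (hlam0 i)]
      ring
    rw [e1, e2, e3] at h
    exact h
  -- numeric conclusion
  have hcast : ((n : ℝ)) ≤ 2 * d + 2 := by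
    rcases Nat.eq_zero_or_pos n with h0 | hpos
    · rw [h0]; push_cast; positivity
    have hnpos : (0:ℝ) < n := by exact_mod_cast hpos
    have ht0 : (0:ℝ) < t := by linarith
    have hS3eq : S3 = 3 * t * S2 - 2 * (n:ℝ) * t^3 := by
      rw [hS3, hS2]; ring
    have hq1 : S2 ^ 2 ≤ n * t * (3 * t * S2 - 2 * n * t^3) := by
      rw [← hS1, ← hS3eq]; exact hcs2
    have ht2 : (0:ℝ) < t^2 := by positivity
    have hS2le : S2 ≤ 2 * n * t^2 := by
      nlinarith [hq1, mul_pos hnpos ht2]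
    have : (n:ℝ)^2 * t^2 ≤ (d+1) * (2 * n * t^2) := by
      calc (n:ℝ)^2 * t^2 = S1^2 := by rw [hS1]; ring
        _ ≤ (d+1) * S2 := hsupp
        _ ≤ (d+1) * (2 * n * t^2) := by
            apply mul_le_mul_of_nonneg_left hS2le (by positivity)
    have hnt : (0:ℝ) < (n:ℝ) * t^2 := mul_pos hnpos ht2
    have h4 : (n:ℝ) * ((n:ℝ) * t^2) ≤ (2*(d:ℝ)+2) * ((n:ℝ) * t^2) := by nlinarith [this]
    have h5 := le_of_mul_le_mul_right h4 hnt
    -- cast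
    linarith
  exact_mod_cast hcast
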